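/- Let F be a finite field of characteristic 2 with |F| = q. Then there exists a ∈ F with tr(a) = 1 such that the 2×2 matrix M = [[0, a], [1, 1]] over F has the property that the least n ≥ 1 for which M^n is a scalar matrix is n = q + 1 (equivalently, the Möbius map z ↦ a/(z+1) acts on the projective line PG(1, q) as a cyclic permutation of order q + 1). -/

import Mathlib

/-- The absolute trace `tr(x) = x + x² + x⁴ + ⋯ + x^{2^{k-1}}` of a finite field
of order `2^k`, taking values in the prime subfield `{0, 1} ⊆ F`. -/
def fieldTr {F : Type*} [Field F] (k : ℕ) (x : F) : F :=
  ∑ i ∈ Finset.range k, x ^ (2 ^ i)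

open Polynomial

theorem exists_trace_one_mobius_order_card_add_one
    {F : Type*} [Field F] [Fintype F] [CharP F 2] (k : ℕ)
    (hcard : Fintype.card F = 2 ^ k) :
    ∃ a : F, fieldTr k a = 1 ∧
      IsLeast {n : ℕ | 1 ≤ n ∧ ∃ c : F,
          (!![0, a; 1, 1]) ^ n = c • (1 : Matrix (Fin 2) (Fin 2) F)}
        (Fintype.card F + 1) := by
  classical
  have hq2 : 2 ≤ Fintype.card F := Fintype.one_lt_card
  set q := Fintype.card F with hq
  have two_eq_zero : (2 : F) = 0 := by exact_mod_cast CharP.cast_eq_zero F 2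
  have hk0 : k ≠ 0 := by rintro rfl; simp at hcard; omega
  have hqeven : 2 ∣ q := hcard ▸ dvd_pow_self 2 hk0
  -- nat arithmetic facts
  have e1 : q ^ 2 - 1 = (q + 1) * (q - 1) := by
    obtain ⟨m, hm⟩ : ∃ m, q = m + 2 := ⟨q - 2, by omega⟩
    rw [hm]
    have h1 : (m + 2) ^ 2 = m * m + 4 * m + 4 := by ring
    have h2 : (m + 2 + 1) * (m + 2 - 1) = m * m + 4 * m + 3 := by
      have h : m + 2 - 1 = m + 1 := by omega
      rw [h]; ring
    omega
  have e5 : (q + 1) * (q - 1) + 1 = q * q := by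
    obtain ⟨m, hm⟩ : ∃ m, q = m + 2 := ⟨q - 2, by omega⟩
    rw [hm]
    have h2 : (m + 2 + 1) * (m + 2 - 1) = m * m + 4 * m + 3 := by
      have h : m + 2 - 1 = m + 1 := by omega
      rw [h]; ring
    have h1 : (m + 2) * (m + 2) = m * m + 4 * m + 4 := by ring
    omega
  have e4 : Nat.gcd (q + 1) (q - 1) = 1 := by
    have hd2 : Nat.gcd (q + 1) (q - 1) ∣ 2 := by
      have : (q + 1) - (q - 1) = 2 := by omega
      calc Nat.gcd (q + 1) (q - 1) ∣ (q + 1) - (q - 1) :=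
            Nat.dvd_sub (Nat.gcd_dvd_left _ _) (Nat.gcd_dvd_right _ _)
        _ = 2 := this
    rcases (Nat.prime_two.eq_one_or_self_of_dvd _ hd2) with h | h
    · exact h
    · exfalso
      have : Nat.gcd (q + 1) (q - 1) ∣ q + 1 := Nat.gcd_dvd_left _ _
      rw [h] at this
      omega
  -- Step 1: find a₀ such that x ↦ x² + x misses it
  obtain ⟨a₀, ha₀⟩ : ∃ a₀ : F, ∀ x : F, x * x + x ≠ a₀ := by
    by_contra hcon
    push_neg at hcon
    have hsurj : Function.Surjective (fun x : F => x * x + x) := fun b => hcon b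
    have hinj := Finite.injective_iff_surjective.mpr hsurj
    have h01 : (fun x : F => x * x + x) 0 = (fun x : F => x * x + x) 1 := by
      simp only
      linear_combination -two_eq_zero
    exact zero_ne_one (hinj h01)
  -- the irreducible quadratic
  set p₀ : Polynomial F := X ^ 2 + X + C a₀ with hp₀def
  have hp₀deg : p₀.natDegree = 2 := by
    have h : p₀ = C 1 * X ^ 2 + C 1 * X + C a₀ := by simp [hp₀def]
    rw [h, natDegree_quadratic one_ne_zero]
  have hp₀ne : p₀ ≠ 0 := fun h => by simp [h] at hp₀deg
  have hp₀irr : Irreducible p₀ := by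
    rw [Polynomial.irreducible_iff_roots_eq_zero_of_degree_le_three (by omega) (by omega)]
    rw [Multiset.eq_zero_iff_forall_notMem]
    intro x hx
    rw [Polynomial.mem_roots hp₀ne] at hx
    have hx' : x ^ 2 + x + a₀ = 0 := by
      simpa [hp₀def, Polynomial.IsRoot] using hx
    exact ha₀ x (by linear_combination -hx' + (x * x + x) * two_eq_zero)
  haveI : Fact (Irreducible p₀) := ⟨hp₀irr⟩
  -- the quadratic extension L
  let pb : PowerBasis F (AdjoinRoot p₀) := AdjoinRoot.powerBasis hp₀ne
  haveI : Fintype (AdjoinRoot p₀) := Module.fintypeOfFintype pb.basis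
  have hpbdim : pb.dim = 2 := by
    simp [pb, AdjoinRoot.powerBasis, hp₀deg]
  have hcardL : Fintype.card (AdjoinRoot p₀) = q ^ 2 := by
    rw [Module.card_fintype pb.basis, Fintype.card_fin, hpbdim, ← hq]
  haveI : CharP (AdjoinRoot p₀) 2 :=
    charP_of_injective_algebraMap (algebraMap F (AdjoinRoot p₀)).injective 2
  have twoL : (2 : AdjoinRoot p₀) = 0 := by
    exact_mod_cast CharP.cast_eq_zero (AdjoinRoot p₀) 2
  -- generator of the unit group
  obtain ⟨g, hg⟩ := IsCyclic.exists_generator (α := (AdjoinRoot p₀)ˣ)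
  have hgord : orderOf g = q ^ 2 - 1 := by
    rw [orderOf_eq_card_of_forall_mem_zpowers hg, Nat.card_eq_fintype_card,
      Fintype.card_units, hcardL]
  set v : (AdjoinRoot p₀)ˣ := g ^ (q - 1) with hv
  have hvord : orderOf v = q + 1 := by
    rw [hv, orderOf_pow, hgord, e1, Nat.gcd_eq_right ⟨q + 1, by rw [mul_comm]⟩,
      Nat.mul_div_cancel _ (by omega)]
  set w : AdjoinRoot p₀ := (v : AdjoinRoot p₀) with hw
  have hw0 : w ≠ 0 := Units.ne_zero v
  have hw1 : w ^ (q + 1) = 1 := by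
    rw [hw, ← Units.val_pow_eq_pow_val, ← hvord, pow_orderOf_eq_one, Units.val_one]
  have hwq2 : w ^ (q * q) = w := by
    rw [← e5, pow_succ, pow_mul, hw1, one_pow, one_mul]
  set t : AdjoinRoot p₀ := w + w ^ q with ht
  have ht0 : t ≠ 0 := by
    intro h
    have hww : w ^ q = w := by
      have : w ^ q = -w := by linear_combination h
      rwa [CharTwo.neg_eq] at this
    have hvv : v ^ q = v := Units.ext (by
      rw [Units.val_pow_eq_pow_val, ← hw]; exact hww)
    have hvq1 : v ^ (q - 1) = 1 := by
      have h1 : v ^ (q - 1) * v = v := by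
        rw [← pow_succ]
        have : q - 1 + 1 = q := by omega
        rw [this, hvv]
      exact mul_right_cancel (by rw [one_mul, h1])
    have := orderOf_dvd_of_pow_eq_one hvq1
    rw [hvord] at this
    have := Nat.le_of_dvd (by omega) this
    omega
  have htq : t ^ q = t := by
    rw [ht, hcard, add_pow_char_pow, ← hcard]
    have h1 : (w ^ q) ^ q = w := by rw [← pow_mul, hwq2]
    rw [h1, add_comm]
  -- t lies in the image of F
  have htmem : t ∈ Finset.univ.image (algebraMap F (AdjoinRoot p₀)) := by
    by_contra hc
    set P : Polynomial (AdjoinRoot p₀) := X ^ q - X with hP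
    have hPne : P ≠ 0 := FiniteField.X_pow_card_sub_X_ne_zero _ (by omega)
    have hPdeg : P.natDegree = q := FiniteField.X_pow_card_sub_X_natDegree_eq _ (by omega)
    have hsub : insert t (Finset.univ.image (algebraMap F (AdjoinRoot p₀)))
        ⊆ P.roots.toFinset := by
      intro u hu
      rw [Multiset.mem_toFinset, Polynomial.mem_roots hPne]
      have hur : u ^ q = u := by
        rcases Finset.mem_insert.mp hu with h | h
        · rw [h]; exact htq
        · obtain ⟨x, -, rfl⟩ := Finset.mem_image.mp h
          rw [← map_pow, FiniteField.pow_card]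
      simp [hP, Polynomial.IsRoot, sub_eq_zero, hur]
    have hcle := Finset.card_le_card hsub
    rw [Finset.card_insert_of_notMem hc,
      Finset.card_image_of_injective _ (algebraMap F (AdjoinRoot p₀)).injective,
      Finset.card_univ, ← hq] at hcle
    have h2 := (Multiset.toFinset_card_le P.roots).trans P.card_roots'
    rw [hPdeg] at h2
    omega
  obtain ⟨s, -, hs⟩ := Finset.mem_image.mp htmem
  have hs0 : s ≠ 0 := by rintro rfl; rw [map_zero] at hs; exact ht0 hs.symm
  -- the normalized root y and the trace-one element a
  set a : F := s⁻¹ * s⁻¹ with hadef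
  set y : AdjoinRoot p₀ := w * t⁻¹ with hy
  have hy0 : y ≠ 0 := mul_ne_zero hw0 (inv_ne_zero ht0)
  have hyqw : y ^ q = w ^ q * t⁻¹ := by rw [hy, mul_pow, inv_pow, htq]
  have hsum : y + y ^ q = 1 := by
    rw [hyqw, hy]
    field_simp
    exact ht.symm
  have hyq' : y ^ q = 1 + y := by linear_combination hsum - y * twoL
  have keyA : y * y + y = algebraMap F (AdjoinRoot p₀) a := by
    have h1 : y * y + y = y * y ^ q := by rw [hyq']; ring
    have h2 : y * y ^ q = (w * w ^ q) * (t⁻¹ * t⁻¹) := by rw [hyqw, hy]; ring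
    have h3 : w * w ^ q = 1 := by rw [← pow_succ', hw1]
    rw [h1, h2, h3, one_mul, hadef, map_mul, map_inv₀, hs]
  have hmapa : algebraMap F (AdjoinRoot p₀) a = t⁻¹ * t⁻¹ := by
    rw [hadef, map_mul, map_inv₀, hs]
  -- trace of a is 1
  have htr : fieldTr k a = 1 := by
    apply (algebraMap F (AdjoinRoot p₀)).injective
    rw [map_one, fieldTr, map_sum]
    have hterm : ∀ i, (algebraMap F (AdjoinRoot p₀)) (a ^ 2 ^ i)
        = y ^ 2 ^ (i + 1) - y ^ 2 ^ i := by
      intro i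
      rw [map_pow, ← keyA, CharTwo.sub_eq_add, add_pow_char_pow (p := 2)]
      congr 1
      rw [← sq, ← pow_mul]
      congr 1
      rw [pow_succ]
      ring
    calc ∑ i ∈ Finset.range k, (algebraMap F (AdjoinRoot p₀)) (a ^ 2 ^ i)
        = ∑ i ∈ Finset.range k, (y ^ 2 ^ (i + 1) - y ^ 2 ^ i) := by
          exact Finset.sum_congr rfl fun i _ => hterm i
      _ = y ^ 2 ^ k - y ^ 2 ^ 0 := Finset.sum_range_sub (fun i => y ^ 2 ^ i) k
      _ = y ^ q + y := by rw [← hcard, CharTwo.sub_eq_add, pow_zero, pow_one]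
      _ = 1 := by rw [add_comm]; exact hsum
  -- y is not in the image of F
  have hynot : ∀ z : F, y ≠ algebraMap F (AdjoinRoot p₀) z := by
    intro z hz
    have : y ^ q = y := by rw [hz, ← map_pow, FiniteField.pow_card]
    rw [hyq'] at this
    exact one_ne_zero (α := AdjoinRoot p₀) (by linear_combination this)
  -- basis {1, y}
  have hfinrank : Module.finrank F (AdjoinRoot p₀) = 2 := by rw [pb.finrank, hpbdim]
  have hli : LinearIndependent F ![(1 : AdjoinRoot p₀), y] := by
    rw [LinearIndependent.pair_iff]
    intro c d hcd
    by_cases hd : d = 0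
    · subst hd
      rw [zero_smul, add_zero, smul_eq_zero] at hcd
      rcases hcd with h | h
      · exact ⟨h, rfl⟩
      · exact absurd h one_ne_zero
    · exfalso
      apply hynot (d⁻¹ * (-c))
      have : y = (d⁻¹ * (-c)) • (1 : AdjoinRoot p₀) := by
        have hdy : d • y = (-c) • (1 : AdjoinRoot p₀) := by
          rw [neg_smul]
          linear_combination hcd
        rw [mul_smul, ← hdy, ← mul_smul, inv_mul_cancel₀ hd, one_smul]
      rw [this, Algebra.algebraMap_eq_smul_one]
  let b : Module.Basis (Fin 2) F (AdjoinRoot p₀) :=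
    basisOfLinearIndependentOfCardEqFinrank hli (by rw [Fintype.card_fin, hfinrank])
  have hbcoe : ⇑b = ![(1 : AdjoinRoot p₀), y] :=
    coe_basisOfLinearIndependentOfCardEqFinrank hli _
  have hb0 : b 0 = 1 := by rw [hbcoe]; rfl
  have hb1 : b 1 = y := by rw [hbcoe]; rfl
  set ψ := Algebra.leftMulMatrix b with hψ
  have hyy : y * y = a • b 0 + b 1 := by
    rw [hb0, hb1, ← Algebra.algebraMap_eq_smul_one]
    linear_combination keyA - y * twoL
  have hrep0 : b.repr (y * b 0) = Finsupp.single 1 1 := by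
    rw [hb0, mul_one, show y = b 1 from hb1.symm, Module.Basis.repr_self]
  have hrep1 : b.repr (y * b 1) = Finsupp.single (0 : Fin 2) a + Finsupp.single 1 1 := by
    rw [hb1, hyy, map_add, map_smul, Module.Basis.repr_self, Module.Basis.repr_self,
      Finsupp.smul_single, smul_eq_mul, mul_one]
  have hψy : ψ y = !![0, a; 1, 1] := by
    ext i j
    rw [hψ, Algebra.leftMulMatrix_eq_repr_mul]
    fin_cases i <;> fin_cases j <;>
      simp [hrep0, hrep1, Finsupp.single_apply]
  have hψinj : Function.Injective ψ := Algebra.leftMulMatrix_injective b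
  have hiff : ∀ (n : ℕ) (c : F),
      (!![0, a; 1, 1]) ^ n = c • (1 : Matrix (Fin 2) (Fin 2) F)
        ↔ y ^ n = algebraMap F (AdjoinRoot p₀) c := by
    intro n c
    have hsc : ψ (algebraMap F (AdjoinRoot p₀) c) = c • (1 : Matrix (Fin 2) (Fin 2) F) := by
      rw [AlgHom.commutes, Algebra.algebraMap_eq_smul_one]
    rw [← hψy, ← map_pow, ← hsc]
    exact ⟨fun h => hψinj h, fun h => congrArg ψ h⟩
  refine ⟨a, htr, ⟨⟨by omega, a, ?_⟩, ?_⟩⟩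
  · -- membership: M ^ (q+1) = a • 1
    rw [hiff]
    rw [pow_succ', hyq', ← keyA]
    ring
  · -- minimality
    rintro n ⟨hn1, c, hc⟩
    rw [hiff] at hc
    have hc0 : c ≠ 0 := by
      rintro rfl
      rw [map_zero] at hc
      exact pow_ne_zero n hy0 hc
    have h5 : y ^ (n * (q - 1)) = 1 := by
      rw [pow_mul, hc, ← map_pow, FiniteField.pow_card_sub_one_eq_one c hc0, map_one]
    have htpow : t ^ (q - 1) = 1 := by
      rw [← hs, ← map_pow, FiniteField.pow_card_sub_one_eq_one s hs0, map_one]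
    have hyq1 : y ^ (q - 1) = ((v ^ (q - 1) : (AdjoinRoot p₀)ˣ) : AdjoinRoot p₀) := by
      rw [hy, mul_pow, inv_pow, htpow, inv_one, mul_one, hw, ← Units.val_pow_eq_pow_val]
    have h6 : (v ^ (q - 1)) ^ n = 1 := by
      rw [← Units.val_eq_one, Units.val_pow_eq_pow_val, ← hyq1, ← pow_mul, mul_comm, h5]
    have h7 : orderOf (v ^ (q - 1)) = q + 1 := by
      rw [orderOf_pow, hvord, e4, Nat.div_one]
    have hdvd := orderOf_dvd_of_pow_eq_one h6
    rw [h7] at hdvd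
    exact Nat.le_of_dvd (by omega) hdvd
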